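/- The maps r_i and _ir on the free algebra satisfy the commutation relation: for all homogeneous x and all i, j ∈ I, _jr(r_i(x)) = r_i(_jr(x)). -/

import Mathlib

noncomputable section

def wdeg {I : Type*} [DecidableEq I] (w : FreeMonoid I) : I →₀ ℕ :=
  (w.toList.map fun i => Finsupp.single i 1).sum

def angN {I : Type*} (form : I → I → ℤ) (ν μ : I →₀ ℕ) : ℤ :=
  ν.sum fun i a => μ.sum fun j b => (a : ℤ) * (b : ℤ) * form i j

def dotN {I : Type*} (form : I → I → ℤ) (ν μ : I →₀ ℕ) : ℤ :=
  angN form ν μ + angN form μ ν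

abbrev FreeAlg (K : Type*) [Field K] (I : Type*) : Type _ :=
  MonoidAlgebra K (FreeMonoid I)

def theta {K : Type*} [Field K] {I : Type*} (i : I) : FreeAlg K I :=
  MonoidAlgebra.of K (FreeMonoid I) (FreeMonoid.of i)

def IsHomog {K : Type*} [Field K] {I : Type*} [DecidableEq I]
    (x : FreeAlg K I) (ν : I →₀ ℕ) : Prop :=
  ∀ w ∈ x.coeff.support, wdeg w = ν

set_option linter.unusedSectionVars false

section one

variable {I : Type*} [DecidableEq I] {K : Type*} [Field K]

lemma wdeg_one : wdeg (1 : FreeMonoid I) = 0 := rfl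

lemma wdeg_mul (a b : FreeMonoid I) : wdeg (a * b) = wdeg a + wdeg b := by
  simp [wdeg, FreeMonoid.toList_mul]

lemma wdeg_of (i : I) : wdeg (FreeMonoid.of i) = Finsupp.single i 1 := by
  simp [wdeg]

lemma angN_eq [Fintype I] (form : I → I → ℤ) (ν μ : I →₀ ℕ) :
    angN form ν μ = ∑ i, ∑ j, (ν i : ℤ) * (μ j : ℤ) * form i j := by
  rw [angN, Finsupp.sum_fintype]
  · refine Finset.sum_congr rfl fun i _ => ?_
    rw [Finsupp.sum_fintype]
    simp
  · simp [Finsupp.sum]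

lemma angN_add_left [Fintype I] (form : I → I → ℤ) (ν ν' μ : I →₀ ℕ) :
    angN form (ν + ν') μ = angN form ν μ + angN form ν' μ := by
  simp [angN_eq, add_mul, Finset.sum_add_distrib]

lemma angN_add_right [Fintype I] (form : I → I → ℤ) (ν μ μ' : I →₀ ℕ) :
    angN form ν (μ + μ') = angN form ν μ + angN form ν μ' := by
  simp [angN_eq, mul_add, add_mul, Finset.sum_add_distrib]

lemma IsHomog.zero (ν : I →₀ ℕ) : IsHomog (0 : FreeAlg K I) ν := by simp [IsHomog]

lemma IsHomog.smul (c : K) {x : FreeAlg K I} {ν} (h : IsHomog x ν) : IsHomog (c • x) ν :=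
  fun w hw => h w (Finsupp.support_smul hw)

lemma IsHomog.add {x y : FreeAlg K I} {ν} (hx : IsHomog x ν) (hy : IsHomog y ν) :
    IsHomog (x + y) ν := fun w hw => by
  classical
  rcases Finset.mem_union.1 (Finsupp.support_add hw) with h | h
  · exact hx w h
  · exact hy w h

lemma IsHomog.mul {x y : FreeAlg K I} {ν μ} (hx : IsHomog x ν) (hy : IsHomog y μ) :
    IsHomog (x * y) (ν + μ) := fun w hw => by
  classical
  obtain ⟨a, ha, b, hb, rfl⟩ := Finset.mem_mul.1 (MonoidAlgebra.support_coeff_mul_subset x y hw)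
  rw [wdeg_mul, hx a ha, hy b hb]

lemma isHomog_of (w : FreeMonoid I) : IsHomog (MonoidAlgebra.of K (FreeMonoid I) w) (wdeg w) := by
  intro u hu
  simp only [MonoidAlgebra.of_apply, MonoidAlgebra.coeff_single] at hu
  have := Finsupp.support_single_subset hu
  simp at this
  subst this; rfl

lemma isHomog_theta (i : I) : IsHomog (theta i : FreeAlg K I) (Finsupp.single i 1) := by
  have := isHomog_of (K := K) (FreeMonoid.of i)
  rwa [wdeg_of] at this

/-- Vanishing + homogeneity of the twisted derivation on monomials. -/
lemma R_key [Fintype I] (v t : Kˣ) (form : I → I → ℤ)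
    (R : I → FreeAlg K I →ₗ[K] FreeAlg K I)
    (hR1 : ∀ i, R i 1 = 0)
    (hRθ : ∀ i j, R i (theta j) = if i = j then 1 else 0)
    (hRmul : ∀ (i : I) (x y : FreeAlg K I) (ν μ : I →₀ ℕ), IsHomog x ν → IsHomog y μ →
      R i (x * y) =
        ((v ^ dotN form (Finsupp.single i 1) μ *
          t ^ (angN form μ (Finsupp.single i 1) - angN form (Finsupp.single i 1) μ) : Kˣ) : K) •
          (R i x * y) + x * R i y)
    (i : I) (w : FreeMonoid I) :
    (wdeg w i = 0 → R i (MonoidAlgebra.of K (FreeMonoid I) w) = 0) ∧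
    IsHomog (R i (MonoidAlgebra.of K (FreeMonoid I) w)) (wdeg w - Finsupp.single i 1) := by
  induction w using FreeMonoid.recOn with
  | one =>
    rw [map_one, hR1]
    exact ⟨fun _ => rfl, IsHomog.zero _⟩
  | of_mul x xs ih =>
    have hofmul : MonoidAlgebra.of K (FreeMonoid I) (FreeMonoid.of x * xs)
        = theta x * MonoidAlgebra.of K (FreeMonoid I) xs := map_mul _ _ _
    have hw : wdeg (FreeMonoid.of x * xs) = Finsupp.single x 1 + wdeg xs := by
      rw [wdeg_mul, wdeg_of]
    set y := MonoidAlgebra.of K (FreeMonoid I) xs with hy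
    set μ := wdeg xs with hμ
    have hexp := hRmul i (theta x) y (Finsupp.single x 1) μ (isHomog_theta x) (isHomog_of xs)
    rw [hRθ] at hexp
    by_cases hix : i = x
    · subst hix
      rw [if_pos rfl, one_mul] at hexp
      constructor
      · intro h
        rw [hw] at h
        simp [Finsupp.single_apply] at h
      · rw [hofmul, hexp, hw, add_tsub_cancel_left]
        refine IsHomog.add (IsHomog.smul _ (isHomog_of xs)) ?_
        by_cases hμi : μ i = 0
        · rw [ih.1 hμi, mul_zero]
          exact IsHomog.zero _
        · have h2 : Finsupp.single i 1 + (μ - Finsupp.single i 1) = μ := by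
            ext a
            simp only [Finsupp.add_apply, Finsupp.tsub_apply, Finsupp.single_apply]
            by_cases hax : i = a
            · subst hax; simp; omega
            · simp [hax]
          have := IsHomog.mul (isHomog_theta (K := K) i) ih.2
          rwa [h2] at this
    · simp only [if_neg hix, zero_mul, smul_zero, zero_add] at hexp
      constructor
      · intro h
        rw [hw] at h
        simp only [Finsupp.add_apply, Finsupp.single_apply, if_neg (Ne.symm hix)] at h
        rw [hofmul, hexp, ih.1 (by simpa using h), mul_zero]
      · rw [hofmul, hexp, hw]
        have h2 : Finsupp.single x 1 + (μ - Finsupp.single i 1)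
            = Finsupp.single x 1 + μ - Finsupp.single i 1 := by
          ext a
          simp only [Finsupp.add_apply, Finsupp.tsub_apply, Finsupp.single_apply]
          by_cases hax : x = a <;> by_cases hai : i = a <;>
            simp_all <;> omega
        have := IsHomog.mul (isHomog_theta (K := K) x) ih.2
        rwa [h2] at this

end one

section two
variable {I : Type*} [DecidableEq I] {K : Type*} [Field K]

lemma L_key [Fintype I] (v t : Kˣ) (form : I → I → ℤ)
    (L : I → FreeAlg K I →ₗ[K] FreeAlg K I)
    (hL1 : ∀ i, L i 1 = 0)
    (hLθ : ∀ i j, L i (theta j) = if i = j then 1 else 0)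
    (hLmul : ∀ (i : I) (x y : FreeAlg K I) (ν μ : I →₀ ℕ), IsHomog x ν → IsHomog y μ →
      L i (x * y) =
        L i x * y +
        ((v ^ dotN form (Finsupp.single i 1) ν *
          t ^ (angN form (Finsupp.single i 1) ν - angN form ν (Finsupp.single i 1)) : Kˣ) : K) •
          (x * L i y))
    (i : I) (w : FreeMonoid I) :
    (wdeg w i = 0 → L i (MonoidAlgebra.of K (FreeMonoid I) w) = 0) ∧
    IsHomog (L i (MonoidAlgebra.of K (FreeMonoid I) w)) (wdeg w - Finsupp.single i 1) := by
  induction w using FreeMonoid.recOn with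
  | one =>
    rw [map_one, hL1]
    exact ⟨fun _ => rfl, IsHomog.zero _⟩
  | of_mul x xs ih =>
    have hofmul : MonoidAlgebra.of K (FreeMonoid I) (FreeMonoid.of x * xs)
        = theta x * MonoidAlgebra.of K (FreeMonoid I) xs := map_mul _ _ _
    have hw : wdeg (FreeMonoid.of x * xs) = Finsupp.single x 1 + wdeg xs := by
      rw [wdeg_mul, wdeg_of]
    set y := MonoidAlgebra.of K (FreeMonoid I) xs with hy
    set μ := wdeg xs with hμ
    have hexp := hLmul i (theta x) y (Finsupp.single x 1) μ (isHomog_theta x) (isHomog_of xs)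
    rw [hLθ] at hexp
    by_cases hix : i = x
    · subst hix
      rw [if_pos rfl, one_mul] at hexp
      constructor
      · intro h
        rw [hw] at h
        simp [Finsupp.single_apply] at h
      · rw [hofmul, hexp, hw, add_tsub_cancel_left]
        refine IsHomog.add (isHomog_of xs) (IsHomog.smul _ ?_)
        by_cases hμi : μ i = 0
        · rw [ih.1 hμi, mul_zero]
          exact IsHomog.zero _
        · have h2 : Finsupp.single i 1 + (μ - Finsupp.single i 1) = μ := by
            ext a
            simp only [Finsupp.add_apply, Finsupp.tsub_apply, Finsupp.single_apply]
            by_cases hax : i = a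
            · subst hax; simp; omega
            · simp [hax]
          have := IsHomog.mul (isHomog_theta (K := K) i) ih.2
          rwa [h2] at this
    · rw [if_neg hix, zero_mul, zero_add] at hexp
      constructor
      · intro h
        rw [hw] at h
        simp only [Finsupp.add_apply, Finsupp.single_apply, if_neg (Ne.symm hix)] at h
        rw [hofmul, hexp, ih.1 (by simpa using h), mul_zero, smul_zero]
      · rw [hofmul, hexp, hw]
        have h2 : Finsupp.single x 1 + (μ - Finsupp.single i 1)
            = Finsupp.single x 1 + μ - Finsupp.single i 1 := by
          ext a
          simp only [Finsupp.add_apply, Finsupp.tsub_apply, Finsupp.single_apply]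
          by_cases hax : x = a <;> by_cases hai : i = a <;>
            simp_all <;> omega
        have := IsHomog.mul (isHomog_theta (K := K) x) ih.2
        rw [h2] at this
        exact IsHomog.smul _ this

lemma key_units (v t : Kˣ) (A B C D : ℤ) :
    v ^ ((C + A) + (D + B)) * t ^ ((D + B) - (C + A))
      = v ^ (B + A) * t ^ (B - A) * (v ^ (C + D) * t ^ (D - C)) := by
  rw [show (C+A)+(D+B) = (B+A)+(C+D) by ring, show (D+B)-(C+A) = (B-A)+(D-C) by ring]
  conv_lhs => rw [zpow_add v, zpow_add t]
  exact mul_mul_mul_comm _ _ _ _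

lemma scalar_id [Fintype I] (v t : Kˣ) (form : I → I → ℤ) (i j : I) (μ : I →₀ ℕ)
    (h : μ j ≠ 0) :
    (v ^ dotN form (Finsupp.single i 1) μ *
      t ^ (angN form μ (Finsupp.single i 1) - angN form (Finsupp.single i 1) μ) : Kˣ)
    = (v ^ dotN form (Finsupp.single j 1) (Finsupp.single i 1) *
        t ^ (angN form (Finsupp.single j 1) (Finsupp.single i 1)
          - angN form (Finsupp.single i 1) (Finsupp.single j 1)))
      * (v ^ dotN form (Finsupp.single i 1) (μ - Finsupp.single j 1) *
        t ^ (angN form (μ - Finsupp.single j 1) (Finsupp.single i 1)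
          - angN form (Finsupp.single i 1) (μ - Finsupp.single j 1))) := by
  have hle : Finsupp.single j 1 ≤ μ := by
    rw [Finsupp.single_le_iff]
    omega
  have hμ : μ = (μ - Finsupp.single j 1) + Finsupp.single j 1 := (tsub_add_cancel_of_le hle).symm
  conv_lhs => rw [hμ]
  rw [dotN, dotN, dotN, angN_add_left, angN_add_right]
  exact key_units v t (angN form (Finsupp.single i 1) (Finsupp.single j 1))
    (angN form (Finsupp.single j 1) (Finsupp.single i 1))
    (angN form (Finsupp.single i 1) (μ - Finsupp.single j 1))
    (angN form (μ - Finsupp.single j 1) (Finsupp.single i 1))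

end two

section three
variable {I : Type*} [DecidableEq I] {K : Type*} [Field K]

lemma comm_word [Fintype I] (v t : Kˣ) (form : I → I → ℤ)
    (R L : I → FreeAlg K I →ₗ[K] FreeAlg K I)
    (hR1 : ∀ i, R i 1 = 0)
    (hRθ : ∀ i j, R i (theta j) = if i = j then 1 else 0)
    (hRmul : ∀ (i : I) (x y : FreeAlg K I) (ν μ : I →₀ ℕ), IsHomog x ν → IsHomog y μ →
      R i (x * y) =
        ((v ^ dotN form (Finsupp.single i 1) μ *
          t ^ (angN form μ (Finsupp.single i 1) - angN form (Finsupp.single i 1) μ) : Kˣ) : K) •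
          (R i x * y) + x * R i y)
    (hL1 : ∀ i, L i 1 = 0)
    (hLθ : ∀ i j, L i (theta j) = if i = j then 1 else 0)
    (hLmul : ∀ (i : I) (x y : FreeAlg K I) (ν μ : I →₀ ℕ), IsHomog x ν → IsHomog y μ →
      L i (x * y) =
        L i x * y +
        ((v ^ dotN form (Finsupp.single i 1) ν *
          t ^ (angN form (Finsupp.single i 1) ν - angN form ν (Finsupp.single i 1)) : Kˣ) : K) •
          (x * L i y))
    (i j : I) (w : FreeMonoid I) :
    L j (R i (MonoidAlgebra.of K (FreeMonoid I) w))
      = R i (L j (MonoidAlgebra.of K (FreeMonoid I) w)) := by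
  induction w using FreeMonoid.recOn with
  | one => rw [map_one, hR1, hL1, map_zero, map_zero]
  | of_mul x xs ih =>
    set y := MonoidAlgebra.of K (FreeMonoid I) xs with hy
    set μ := wdeg xs with hμdef
    have hθ := isHomog_theta (K := K) x
    have hyh : IsHomog y μ := isHomog_of xs
    have hRy := (R_key v t form R hR1 hRθ hRmul i xs).2
    have hLy := (L_key v t form L hL1 hLθ hLmul j xs).2
    have hofmul : MonoidAlgebra.of K (FreeMonoid I) (FreeMonoid.of x * xs) = theta x * y :=
      map_mul _ _ _
    rw [hofmul]
    conv_lhs => rw [hRmul i (theta x) y _ _ hθ hyh, hRθ, map_add, map_smul,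
        hLmul j (theta x) (R i y) _ _ hθ hRy, hLθ]
    conv_rhs => rw [hLmul j (theta x) y _ _ hθ hyh, hLθ, map_add, map_smul,
        hRmul i (theta x) (L j y) _ _ hθ hLy, hRθ]
    rw [ih]
    have hLv := (L_key v t form L hL1 hLθ hLmul j xs).1
    by_cases hix : i = x <;> by_cases hjx : j = x <;>
      simp only [hix, hjx, eq_self_iff_true, if_true, if_false, one_mul, zero_mul, map_zero,
        smul_zero, zero_add, add_zero, smul_add, smul_smul]
    · -- i = x, j = x
      by_cases h0 : wdeg xs x = 0
      · have hz : L x y = 0 := (L_key v t form L hL1 hLθ hLmul x xs).1 h0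
        rw [hz]
        simp
      · rw [← Units.val_mul, ← scalar_id v t form x x (wdeg xs) h0, hμdef]
        exact add_left_comm _ _ _
    · -- i = x, j ≠ x
      by_cases h0 : wdeg xs j = 0
      · have hz : L j y = 0 := hLv h0
        rw [hz]
        simp
      · rw [← Units.val_mul, ← scalar_id v t form x j (wdeg xs) h0, hμdef]

end three

/-- the twisted derivations `r_i` and `_jr` commute:
`_jr(r_i(x)) = r_i(_jr(x))` for all homogeneous `x` and all `i, j ∈ I`. -/
theorem ri_jr_comm {I : Type*} [Fintype I] [DecidableEq I] {K : Type*} [Field K]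
    (v t : Kˣ) (form : I → I → ℤ)
    (R L : I → FreeAlg K I →ₗ[K] FreeAlg K I)
    (hR1 : ∀ i, R i 1 = 0)
    (hRθ : ∀ i j, R i (theta j) = if i = j then 1 else 0)
    (hRmul : ∀ (i : I) (x y : FreeAlg K I) (ν μ : I →₀ ℕ), IsHomog x ν → IsHomog y μ →
      R i (x * y) =
        ((v ^ dotN form (Finsupp.single i 1) μ *
          t ^ (angN form μ (Finsupp.single i 1) - angN form (Finsupp.single i 1) μ) : Kˣ) : K) •
          (R i x * y) + x * R i y)
    (hL1 : ∀ i, L i 1 = 0)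
    (hLθ : ∀ i j, L i (theta j) = if i = j then 1 else 0)
    (hLmul : ∀ (i : I) (x y : FreeAlg K I) (ν μ : I →₀ ℕ), IsHomog x ν → IsHomog y μ →
      L i (x * y) =
        L i x * y +
        ((v ^ dotN form (Finsupp.single i 1) ν *
          t ^ (angN form (Finsupp.single i 1) ν - angN form ν (Finsupp.single i 1)) : Kˣ) : K) •
          (x * L i y)) :
    ∀ (i j : I) (x : FreeAlg K I) (ν : I →₀ ℕ), IsHomog x ν →
      L j (R i x) = R i (L j x) := by
  intro i j x ν hν
  clear hν
  induction x using MonoidAlgebra.induction_on with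
  | of w => exact comm_word v t form R L hR1 hRθ hRmul hL1 hLθ hLmul i j w
  | add f g hf hg => rw [map_add, map_add, hf, hg, map_add, map_add]
  | smul r f hf => rw [map_smul, map_smul, hf, map_smul, map_smul]

end
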